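/- Let S be a maximum obtuse almost-equiangular subset of S^{n-1} and let G be its distance graph (x adjacent to y iff x·y = -1/n). If G contains a clique of size n+1, then S is the disjoint union of two regular n-simplices (i.e., the complement of G is the complete bipartite-type graph formed by two disjoint K_{n+1}'s). -/

import Mathlib

open scoped RealInnerProductSpace

theorem clique_implies_double_simplex (n : ℕ)
    (x : Fin (2 * (n + 1)) → EuclideanSpace ℝ (Fin n))
    (hinj : Function.Injective x)
    (hunit : ∀ i, ‖x i‖ = 1)
    (halmost : ∀ i j k : Fin (2 * (n + 1)), i ≠ j → i ≠ k → j ≠ k →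
      ⟪x i, x j⟫ = -1 / n ∨ ⟪x i, x k⟫ = -1 / n ∨ ⟪x j, x k⟫ = -1 / n)
    (T : Finset (Fin (2 * (n + 1))))
    (hT : T.card = n + 1)
    (hclique : ∀ i ∈ T, ∀ j ∈ T, i ≠ j → ⟪x i, x j⟫ = -1 / n) :
    ∃ A B : Finset (Fin (2 * (n + 1))),
      Disjoint A B ∧ A ∪ B = Finset.univ ∧ A.card = n + 1 ∧ B.card = n + 1 ∧
      (∀ i ∈ A, ∀ j ∈ A, i ≠ j → ⟪x i, x j⟫ = -1 / n) ∧
      (∀ i ∈ B, ∀ j ∈ B, i ≠ j → ⟪x i, x j⟫ = -1 / n) := by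
  classical
  set c : ℝ := 1 + 1 / n with hc
  have hc0 : (0:ℝ) < c := by rw [hc]; positivity
  let z : Fin (2 * (n + 1)) → EuclideanSpace ℝ (Fin (n + 1)) :=
    fun a => WithLp.toLp 2 (Fin.snoc (α := fun _ => ℝ) (WithLp.ofLp (x a)) (1 / Real.sqrt n))
  have hz : ∀ a b, ⟪z a, z b⟫ = ⟪x a, x b⟫ + 1 / n := by
    intro a b
    have h1 : (1 / Real.sqrt n) * (1 / Real.sqrt n) = 1 / (n:ℝ) := by
      rw [div_mul_div_comm, one_mul, Real.mul_self_sqrt (by positivity)]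
    simp only [z, PiLp.inner_apply, PiLp.toLp_apply, RCLike.inner_apply, conj_trivial,
      Fin.sum_univ_castSucc, Fin.snoc_castSucc, Fin.snoc_last]
    rw [h1]
  have hzc : ∀ a, ⟪z a, z a⟫ = c := by
    intro a
    rw [hz, hc]
    have : ⟪x a, x a⟫ = 1 := by
      rw [real_inner_self_eq_norm_mul_norm, hunit, one_mul]
    rw [this]
  have hzT : ∀ k ∈ T, ∀ k' ∈ T, k ≠ k' → ⟪z k, z k'⟫ = 0 := by
    intro k hk k' hk' hne
    rw [hz, hclique k hk k' hk' hne]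
    ring
  -- orthonormal family indexed by T
  let e : T → EuclideanSpace ℝ (Fin (n + 1)) := fun k => (Real.sqrt c)⁻¹ • z k
  have hse : Real.sqrt c * Real.sqrt c = c := Real.mul_self_sqrt hc0.le
  have hs0 : Real.sqrt c ≠ 0 := by positivity
  have horth : Orthonormal ℝ e := by
    rw [orthonormal_iff_ite]
    intro i j
    rw [real_inner_smul_left, real_inner_smul_right]
    by_cases h : i = j
    · subst h
      rw [hzc, if_pos rfl, ← hse]
      field_simp
      rw [Real.sqrt_sq (Real.sqrt_nonneg c)]
    · have : (i : Fin (2 * (n + 1))) ≠ (j : Fin (2 * (n + 1))) :=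
        fun hh => h (Subtype.ext hh)
      rw [hzT i i.2 j j.2 this]
      simp [h]
  have hTne : Nonempty (↥T) :=
    Finset.Nonempty.to_subtype (Finset.card_pos.mp (by rw [hT]; omega))
  have hcard : Fintype.card ↥T = Module.finrank ℝ (EuclideanSpace ℝ (Fin (n + 1))) := by
    rw [Fintype.card_coe, hT, finrank_euclideanSpace_fin]
  let b := basisOfLinearIndependentOfCardEqFinrank horth.linearIndependent hcard
  have hbe : ⇑b = e := coe_basisOfLinearIndependentOfCardEqFinrank _ _
  have hob : Orthonormal ℝ ⇑b := by rw [hbe]; exact horth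
  let ob := b.toOrthonormalBasis hob
  have hobe : ⇑ob = e := by rw [Module.Basis.coe_toOrthonormalBasis, hbe]
  have key : ∀ j ∈ Tᶜ, ∀ l ∈ Tᶜ, j ≠ l → ⟪x j, x l⟫ = -1 / n := by
    intro j hj l hl hjl
    by_contra hne
    have hjT : j ∉ T := Finset.mem_compl.mp hj
    have hlT : l ∉ T := Finset.mem_compl.mp hl
    have hzero : ⟪z j, z l⟫ = 0 := by
      rw [← ob.sum_inner_mul_inner (z j) (z l)]
      apply Finset.sum_eq_zero
      intro k _
      have hkj : j ≠ (k : Fin (2 * (n + 1))) := fun h => hjT (h ▸ k.2)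
      have hkl : l ≠ (k : Fin (2 * (n + 1))) := fun h => hlT (h ▸ k.2)
      rcases halmost j l k hjl hkj hkl with h | h | h
      · exact absurd h hne
      · have h0 : ⟪z j, z (k : Fin (2 * (n + 1)))⟫ = 0 := by rw [hz, h]; ring
        rw [hobe]
        simp only [e, real_inner_smul_left, real_inner_smul_right, h0]
        ring
      · have h0 : ⟪z (k : Fin (2 * (n + 1))), z l⟫ = 0 := by
          rw [hz, real_inner_comm, h]; ring
        rw [hobe]
        simp only [e, real_inner_smul_left, real_inner_smul_right, h0]
        ring
    rw [hz] at hzero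
    have hr : (-1:ℝ) / n = -(1 / n) := by ring
    exact hne (by rw [hr]; linarith)
  refine ⟨T, Tᶜ, disjoint_compl_right, Finset.union_compl T, hT, ?_, hclique, key⟩
  rw [Finset.card_compl, hT, Fintype.card_fin]
  omega
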